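/- arXiv:2004.08734 — 5 statements merged into one kernel-verified Lean document; each statement's English description precedes it below -/
import Mathlib

section
/- Fix integers r ≥ 2 and a ≥ 2. Suppose G is an r-uniform hypergraph on a finite vertex set Y that has property (q,p), and Z ⊆ Y is a (w,v)-hole of G with w < q. Then the induced subhypergraph of G on Y ∖ Z (the edges of G contained in Y ∖ Z) has property (q−w, p−v). -/
open Finset

/-- `Y` is a clique of the `r`-uniform hypergraph `H`: every `r`-subset of `Y` is an edge. -/
def IsClique (r : ℕ) {α : Type*} (H : Finset (Finset α)) (Y : Finset α) : Prop :=
  ∀ e : Finset α, e ⊆ Y → e.card = r → e ∈ H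

/-- `H` (a hypergraph on vertex set `X`) has property `(q, p)`: every `q`-subset of `X`
contains a `p`-subset which is a clique of `H`. -/
def HasProp (r q p : ℕ) {α : Type*} (X : Finset α) (H : Finset (Finset α)) : Prop :=
  ∀ Z ⊆ X, Z.card = q → ∃ Y ⊆ Z, Y.card = p ∧ IsClique r H Y

/-- If an `r`-uniform hypergraph `G` on vertex set `Y` has property `(q, p)` and
`Z ⊆ Y` is a `(w, v)`-hole of `G` (i.e. `|Z| = w`, the clique number of the subhypergraph
induced on `Z` equals `v`, and `w > a * v`) with `w < q`, then the subhypergraph induced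
on `Y \ Z` has property `(q - w, p - v)`. -/
theorem statement4 {α : Type*} [DecidableEq α] (r a q p w v : ℕ) (hr : 2 ≤ r) (ha : 2 ≤ a)
    (Y : Finset α) (G : Finset (Finset α))
    (hG : ∀ e ∈ G, e ⊆ Y ∧ e.card = r)
    (hprop : HasProp r q p Y G)
    (Z : Finset α) (hZY : Z ⊆ Y) (hZcard : Z.card = w)
    (hcliqueEx : ∃ C ⊆ Z, C.card = v ∧ IsClique r G C)
    (hcliqueMax : ∀ C ⊆ Z, IsClique r G C → C.card ≤ v)
    (hhole : a * v < w) (hwq : w < q) :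
    HasProp r (q - w) (p - v) (Y \ Z) (G.filter (fun e => e ⊆ Y \ Z)) := by
  intro W hW hWcard
  have hdisj : Disjoint W Z := Finset.disjoint_left.2 fun x hx hxZ =>
    (Finset.mem_sdiff.1 (hW hx)).2 hxZ
  have hWY : W ⊆ Y := hW.trans Finset.sdiff_subset
  have hcard : (W ∪ Z).card = q := by
    rw [Finset.card_union_of_disjoint hdisj, hWcard, hZcard]; omega
  obtain ⟨C, hCsub, hCcard, hCclique⟩ := hprop (W ∪ Z) (Finset.union_subset hWY hZY) hcard
  have hCZ : (C ∩ Z).card ≤ v := hcliqueMax _ Finset.inter_subset_right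
    (fun e he hc => hCclique e (he.trans Finset.inter_subset_left) hc)
  have hCdiff : p - v ≤ (C \ Z).card := by
    have h1 := Finset.card_sdiff_add_card_inter C Z
    omega
  obtain ⟨B, hBsub, hBcard⟩ := Finset.exists_subset_card_eq hCdiff
  have hBW : B ⊆ W := by
    intro x hx
    have hxm := Finset.mem_sdiff.1 (hBsub hx)
    rcases Finset.mem_union.1 (hCsub hxm.1) with h | h
    · exact h
    · exact absurd h hxm.2
  refine ⟨B, hBW, hBcard, fun e he hec => ?_⟩
  rw [Finset.mem_filter]
  exact ⟨hCclique e (he.trans (hBsub.trans Finset.sdiff_subset)) hec,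
    (he.trans hBW).trans hW⟩
end

section
/- Fix integers r ≥ 2, a ≥ 2 and ℓ ≥ 1. Suppose F is an r-uniform hypergraph on a finite vertex set X with |X| ≥ aℓ such that for every integer q with 1 ≤ q ≤ aℓ, F has property (q, ⌈q/a⌉). Then for every subset Y ⊆ X with |Y| = aℓ, the number of edges of F contained in Y is at least a·C(ℓ, r). -/
open Finset

private lemma hockey (k : ℕ) : ∀ n, (∑ j ∈ range n, Nat.choose j k) = Nat.choose n (k+1) := by
  intro n
  induction n with
  | zero => simp
  | succ n ih =>
    rw [sum_range_succ, ih, Nat.choose_succ_succ]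
    simp only [Nat.succ_eq_add_one]
    omega

private lemma block (a k n : ℕ) (ha : 0 < a) : ∀ t, t ≤ a →
    (∑ i ∈ range (a*n + t), Nat.choose (i / a) k)
      = (∑ i ∈ range (a*n), Nat.choose (i/a) k) + t * Nat.choose n k := by
  intro t
  induction t with
  | zero => simp
  | succ t ih =>
    intro h
    rw [← Nat.add_assoc, sum_range_succ, ih (by omega)]
    have hdiv : (a*n + t) / a = n := by
      simp [Nat.mul_add_div ha, Nat.div_eq_of_lt (show t < a by omega)]
    rw [hdiv]
    ring

private lemma gsum (a k : ℕ) (ha : 0 < a) :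
    ∀ n, (∑ i ∈ range (a*n), Nat.choose (i/a) k) = a * Nat.choose n (k+1) := by
  intro n
  induction n with
  | zero => simp
  | succ n ih =>
    have : a * (n+1) = a*n + a := by ring
    rw [this, block a k n ha a le_rfl, ih, Nat.choose_succ_succ]
    ring

private lemma main_lemma {α : Type*} [DecidableEq α] (r a ℓ : ℕ) (hr : 2 ≤ r) (ha : 2 ≤ a)
    (X : Finset α) (F : Finset (Finset α))
    (hprop : ∀ q : ℕ, 1 ≤ q → q ≤ a * ℓ → HasProp r q ((q + a - 1) / a) X F) :
    ∀ q, q ≤ a * ℓ → ∀ Y ⊆ X, Y.card = q →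
      (∑ i ∈ range q, Nat.choose (i/a) (r-1)) ≤ (F.filter (fun e => e ⊆ Y)).card := by
  intro q
  induction q with
  | zero => simp
  | succ q ih =>
    intro hq Y hYX hYc
    have hapos : 0 < a := by omega
    have hp : (q + 1 + a - 1) / a = q / a + 1 := by
      have : q + 1 + a - 1 = q + a := by omega
      rw [this, Nat.add_div_right _ hapos]
    obtain ⟨K, hKY, hKcard, hKclique⟩ := hprop (q+1) (by omega) hq Y hYX hYc
    rw [hp] at hKcard
    have hKne : K.Nonempty := card_pos.mp (by rw [hKcard]; exact Nat.succ_pos _)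
    obtain ⟨v, hvK⟩ := hKne
    set Y' := Y.erase v with hY'
    have hvY : v ∈ Y := hKY hvK
    have hY'c : Y'.card = q := by
      rw [hY', card_erase_of_mem hvY, hYc]
      omega
    have hY'X : Y' ⊆ X := (erase_subset _ _).trans hYX
    have hIH := ih (by omega) Y' hY'X hY'c
    set S := (powersetCard (r-1) (K.erase v)).image (insert v) with hSdef
    have hScard : S.card = Nat.choose (q/a) (r-1) := by
      rw [hSdef, card_image_of_injOn, card_powersetCard, card_erase_of_mem hvK, hKcard]
      · simp
      · intro e1 h1 e2 h2 he
        simp only [mem_coe, mem_powersetCard] at h1 h2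
        have hv1 : v ∉ e1 := fun hv => (notMem_erase v K) (h1.1 hv)
        have hv2 : v ∉ e2 := fun hv => (notMem_erase v K) (h2.1 hv)
        have := congrArg (Finset.erase · v) he
        simpa [Finset.erase_insert hv1, Finset.erase_insert hv2] using this
    have hSsub : S ⊆ F.filter (fun e => e ⊆ Y) := by
      intro e he
      rw [hSdef, mem_image] at he
      obtain ⟨e', he', rfl⟩ := he
      rw [mem_powersetCard] at he'
      have hv' : v ∉ e' := fun hv => (notMem_erase v K) (he'.1 hv)
      have hsubK : insert v e' ⊆ K := by
        apply insert_subset hvK (he'.1.trans (erase_subset _ _))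
      have hcard : (insert v e').card = r := by
        rw [card_insert_of_notMem hv', he'.2]; omega
      rw [mem_filter]
      exact ⟨hKclique _ hsubK hcard, hsubK.trans hKY⟩
    have hdisj : Disjoint S (F.filter (fun e => e ⊆ Y')) := by
      rw [disjoint_left]
      intro e heS heF
      rw [hSdef, mem_image] at heS
      obtain ⟨e', he', rfl⟩ := heS
      rw [mem_filter] at heF
      exact notMem_erase v Y (heF.2 (mem_insert_self v e'))
    have hsub2 : F.filter (fun e => e ⊆ Y') ⊆ F.filter (fun e => e ⊆ Y) := by
      intro e he
      rw [mem_filter] at he ⊢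
      exact ⟨he.1, he.2.trans (erase_subset _ _)⟩
    have hunion : S ∪ F.filter (fun e => e ⊆ Y') ⊆ F.filter (fun e => e ⊆ Y) :=
      union_subset hSsub hsub2
    calc (∑ i ∈ range (q+1), Nat.choose (i/a) (r-1))
        = (∑ i ∈ range q, Nat.choose (i/a) (r-1)) + Nat.choose (q/a) (r-1) := sum_range_succ _ _
      _ ≤ (F.filter (fun e => e ⊆ Y')).card + S.card := by
          rw [hScard]; exact Nat.add_le_add_right hIH _
      _ = (S ∪ F.filter (fun e => e ⊆ Y')).card := by
          rw [card_union_of_disjoint hdisj]; omega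
      _ ≤ (F.filter (fun e => e ⊆ Y)).card := card_le_card hunion

/-- If an `r`-uniform hypergraph `F` on vertex set `X` with `|X| ≥ a·ℓ` has property
`(q, ⌈q/a⌉)` for every `1 ≤ q ≤ a·ℓ`, then every `Y ⊆ X` with `|Y| = a·ℓ` contains at
least `a · C(ℓ, r)` edges of `F`.  (Here `⌈q/a⌉ = (q + a - 1) / a` in natural division.) -/
theorem statement5 {α : Type*} [DecidableEq α] (r a ℓ : ℕ) (hr : 2 ≤ r) (ha : 2 ≤ a)
    (hℓ : 1 ≤ ℓ) (X : Finset α) (hX : a * ℓ ≤ X.card)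
    (F : Finset (Finset α)) (hF : ∀ e ∈ F, e ⊆ X ∧ e.card = r)
    (hprop : ∀ q : ℕ, 1 ≤ q → q ≤ a * ℓ → HasProp r q ((q + a - 1) / a) X F) :
    ∀ Y ⊆ X, Y.card = a * ℓ →
      a * Nat.choose ℓ r ≤ (F.filter (fun e => e ⊆ Y)).card := by
  intro Y hYX hYc
  have h := main_lemma r a ℓ hr ha X F hprop (a*ℓ) le_rfl Y hYX hYc
  rwa [gsum a (r-1) (by omega) ℓ, show r - 1 + 1 = r by omega] at h
end

section
/- Fix integers r ≥ 2, a ≥ 2 and ℓ ≥ 1. Suppose F is an r-uniform hypergraph on a finite vertex set X with |X| ≥ aℓ such that for every integer q with 1 ≤ q ≤ aℓ, F has property (q, ⌈q/a⌉). Then for every integer s with 1 ≤ s ≤ aℓ, writing t = ⌈s/a⌉ and b = a·t − s (so 0 ≤ b < a and s = (a−b)t + b(t−1)), every subset Y ⊆ X with |Y| = s satisfies: the number of edges of F contained in Y is at least (a−b)·C(t, r) + b·C(t−1, r). -/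
lemma pascal' (t r : ℕ) (ht : 1 ≤ t) (hr : 1 ≤ r) :
    Nat.choose t r = Nat.choose (t-1) r + Nat.choose (t-1) (r-1) := by
  obtain ⟨t, rfl⟩ : ∃ t', t = t' + 1 := ⟨t - 1, by omega⟩
  obtain ⟨r, rfl⟩ : ∃ r', r = r' + 1 := ⟨r - 1, by omega⟩
  simp [Nat.choose_succ_succ, Nat.add_comm]

lemma arith (a r s : ℕ) (ha : 2 ≤ a) (hr : 2 ≤ r) :
    (a - (a * ((s + 1 + a - 1) / a) - (s+1))) * Nat.choose ((s + 1 + a - 1) / a) r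
      + (a * ((s + 1 + a - 1) / a) - (s+1)) * Nat.choose ((s + 1 + a - 1) / a - 1) r
    ≤ (a - (a * ((s + a - 1) / a) - s)) * Nat.choose ((s + a - 1) / a) r
      + (a * ((s + a - 1) / a) - s) * Nat.choose ((s + a - 1) / a - 1) r
      + Nat.choose ((s + 1 + a - 1) / a - 1) (r-1) := by
  have hsa : s + 1 + a - 1 = s + a := by omega
  rw [hsa]
  have e1 := Nat.div_add_mod (s+a) a
  have m1 := Nat.mod_lt (s+a) (show 0 < a by omega)
  have e2 := Nat.div_add_mod (s+a-1) a
  have m2 := Nat.mod_lt (s+a-1) (show 0 < a by omega)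
  have htt' : (s+a-1)/a ≤ (s+a)/a := Nat.div_le_div_right (by omega)
  have htt2 : (s+a)/a ≤ (s+a-1)/a + 1 := by
    have h : (s + a) ≤ (s + a - 1) + 1 * a := by omega
    calc (s+a)/a ≤ ((s + a - 1) + 1 * a) / a := Nat.div_le_div_right h
      _ = (s+a-1)/a + 1 := Nat.add_mul_div_right _ _ (by omega)
  generalize hm1 : (s+a) % a = u1 at e1 m1
  generalize hm2 : (s+a-1) % a = u2 at e2 m2
  generalize hT : (s+a)/a = t at e1 htt' htt2 ⊢
  generalize hT' : (s+a-1)/a = t' at e2 htt' htt2 ⊢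
  rcases eq_or_lt_of_le htt' with heq | hlt
  · -- t' = t
    subst heq
    generalize hA : a * t' = A at e1 e2 ⊢
    have ht1 : 1 ≤ t' := by
      rcases Nat.eq_zero_or_pos t' with h | h
      · subst h; simp at hA; omega
      · exact h
    have hc1 : a - (A - (s+1)) = (a - (A - s)) + 1 := by omega
    have hc2 : A - (s+1) = (A - s) - 1 := by omega
    rw [hc1, hc2]
    have pas := pascal' t' r ht1 (by omega)
    obtain ⟨b', hb'⟩ : ∃ b'', A - s = b'' + 1 := ⟨A - s - 1, by omega⟩
    rw [hb']
    obtain ⟨k, hk⟩ : ∃ k, a - (b'+1) = k := ⟨_, rfl⟩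
    have hk2 : a - (b'+1) + 1 = k + 1 := by omega
    rw [hk2, hk]
    simp only [Nat.add_sub_cancel]
    rw [pas]
    exact le_of_eq (by ring)
  · -- t = t' + 1
    have heq2 : t = t' + 1 := by omega
    subst heq2
    rw [show a * (t' + 1) = a * t' + a from by ring] at e1 ⊢
    generalize hA : a * t' = A at e1 e2 ⊢
    have hsA : s = A := by omega
    have hc1 : a - (A + a - (s+1)) = 1 := by omega
    have hc2 : A + a - (s+1) = a - 1 := by omega
    have hc3 : a - (A - s) = a := by omega
    have hc4 : A - s = 0 := by omega
    rw [hc1, hc2, hc3, hc4]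
    have pas := pascal' (t'+1) r (by omega) (by omega)
    simp only [Nat.add_sub_cancel] at pas ⊢
    rw [pas]
    have key : Nat.choose t' r + Nat.choose t' (r-1) + (a-1) * Nat.choose t' r
        = ((a-1)+1) * Nat.choose t' r + Nat.choose t' (r-1) := by ring
    have ha1 : a - 1 + 1 = a := by omega
    rw [ha1] at key
    omega


open Finset

/-- If an `r`-uniform hypergraph `F` on vertex set `X` with `|X| ≥ a·ℓ` has property
`(q, ⌈q/a⌉)` for every `1 ≤ q ≤ a·ℓ`, then for every `1 ≤ s ≤ a·ℓ`, writing
`t = ⌈s/a⌉ = (s + a - 1) / a` and `b = a·t - s`, every `Y ⊆ X` with `|Y| = s` contains at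
least `(a - b)·C(t, r) + b·C(t - 1, r)` edges of `F`. -/
theorem statement6 {α : Type*} [DecidableEq α] (r a ℓ : ℕ) (hr : 2 ≤ r) (ha : 2 ≤ a)
    (hℓ : 1 ≤ ℓ) (X : Finset α) (hX : a * ℓ ≤ X.card)
    (F : Finset (Finset α)) (hF : ∀ e ∈ F, e ⊆ X ∧ e.card = r)
    (hprop : ∀ q : ℕ, 1 ≤ q → q ≤ a * ℓ → HasProp r q ((q + a - 1) / a) X F) :
    ∀ s : ℕ, 1 ≤ s → s ≤ a * ℓ → ∀ Y ⊆ X, Y.card = s →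
      (a - (a * ((s + a - 1) / a) - s)) * Nat.choose ((s + a - 1) / a) r
        + (a * ((s + a - 1) / a) - s) * Nat.choose ((s + a - 1) / a - 1) r
        ≤ (F.filter (fun e => e ⊆ Y)).card := by
  have key : ∀ s : ℕ, s ≤ a * ℓ → ∀ Y ⊆ X, Y.card = s →
      (a - (a * ((s + a - 1) / a) - s)) * Nat.choose ((s + a - 1) / a) r
        + (a * ((s + a - 1) / a) - s) * Nat.choose ((s + a - 1) / a - 1) r
        ≤ (F.filter (fun e => e ⊆ Y)).card := by
    intro s
    induction s with
    | zero =>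
      intro _ Y _ _
      have h0 : (0 + a - 1) / a = 0 := Nat.div_eq_of_lt (by omega)
      rw [h0]
      simp [Nat.choose_eq_zero_of_lt (show 0 < r by omega)]
    | succ n ih =>
      intro hle Y hYX hYcard
      obtain ⟨C, hCY, hCcard, hCclique⟩ := hprop (n+1) (by omega) hle Y hYX hYcard
      set t := (n + 1 + a - 1) / a with htdef
      have ht1 : 1 ≤ t := by
        rw [htdef]
        rw [Nat.le_div_iff_mul_le (show 0 < a by omega)]
        omega
      have hCne : C.Nonempty := card_pos.mp (by rw [hCcard]; exact ht1)
      obtain ⟨v, hv⟩ := hCne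
      have hvY : v ∈ Y := hCY hv
      have hY'X : Y.erase v ⊆ X := (erase_subset _ _).trans hYX
      have hY'card : (Y.erase v).card = n := by
        rw [card_erase_of_mem hvY, hYcard]; omega
      have IH := ih (by omega) (Y.erase v) hY'X hY'card
      -- the new edges through v inside the clique C
      set E2 := ((C.erase v).powersetCard (r-1)).image (insert v) with hE2def
      have hnotv : ∀ e ∈ (C.erase v).powersetCard (r-1), v ∉ e := by
        intro e he hve
        have := mem_powersetCard.mp he
        exact (mem_erase.mp (this.1 hve)).1 rfl
      have hE2card : E2.card = Nat.choose (t-1) (r-1) := by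
        rw [hE2def, card_image_of_injOn, card_powersetCard, card_erase_of_mem hv, hCcard]
        intro e he f hf hef
        have hve := hnotv e he
        have hvf := hnotv f hf
        have : (insert v e).erase v = (insert v f).erase v := by rw [hef]
        rwa [erase_insert hve, erase_insert hvf] at this
      have hE2sub : E2 ⊆ F.filter (fun e => e ⊆ Y) := by
        intro e he
        obtain ⟨e', he', rfl⟩ := mem_image.mp he
        obtain ⟨he'sub, he'card⟩ := mem_powersetCard.mp he'
        have hsubC : insert v e' ⊆ C := insert_subset hv (he'sub.trans (erase_subset _ _))
        have hcard : (insert v e').card = r := by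
          rw [card_insert_of_notMem (fun h => (mem_erase.mp (he'sub h)).1 rfl), he'card]
          omega
        exact mem_filter.mpr ⟨hCclique _ hsubC hcard, hsubC.trans hCY⟩
      have hE1sub : F.filter (fun e => e ⊆ Y.erase v) ⊆ F.filter (fun e => e ⊆ Y) := by
        intro e he
        obtain ⟨h1, h2⟩ := mem_filter.mp he
        exact mem_filter.mpr ⟨h1, h2.trans (erase_subset _ _)⟩
      have hdisj : Disjoint (F.filter (fun e => e ⊆ Y.erase v)) E2 := by
        rw [disjoint_left]
        intro e he he2
        obtain ⟨e', he', rfl⟩ := mem_image.mp he2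
        have : v ∈ Y.erase v := (mem_filter.mp he).2 (mem_insert_self v e')
        exact (mem_erase.mp this).1 rfl
      have hcards : (F.filter (fun e => e ⊆ Y.erase v)).card + E2.card
          ≤ (F.filter (fun e => e ⊆ Y)).card := by
        rw [← card_union_of_disjoint hdisj]
        exact card_le_card (union_subset hE1sub hE2sub)
      calc (a - (a * t - (n+1))) * Nat.choose t r + (a * t - (n+1)) * Nat.choose (t-1) r
          ≤ (a - (a * ((n + a - 1) / a) - n)) * Nat.choose ((n + a - 1) / a) r
            + (a * ((n + a - 1) / a) - n) * Nat.choose ((n + a - 1) / a - 1) r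
            + Nat.choose (t-1) (r-1) := arith a r n ha hr
        _ ≤ (F.filter (fun e => e ⊆ Y.erase v)).card + E2.card := by
            rw [hE2card]; exact Nat.add_le_add_right IH _
        _ ≤ (F.filter (fun e => e ⊆ Y)).card := hcards
  intro s _ hs2 Y hYX hYcard
  exact key s hs2 Y hYX hYcard
end

section
/- For all integers r ≥ 2 and p ≥ r−1, t_r(2p+1, p+1) ≤ 1/2^{r−1}. -/
open Finset Filter

/-- `T_r(n, q, p)`: minimum number of edges of an `r`-uniform hypergraph on `n` vertices
having property `(q, p)`. -/
noncomputable def TNum (r n q p : ℕ) : ℕ :=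
  sInf { m | ∃ H : Finset (Finset (Fin n)),
    (∀ e ∈ H, e.card = r) ∧ HasProp r q p Finset.univ H ∧ H.card = m }

/-- `t_r(n, q, p) = T_r(n, q, p) / C(n, r)`. -/
noncomputable def tDen (r n q p : ℕ) : ℝ := (TNum r n q p : ℝ) / (n.choose r)

lemma TNum_le {r n q p m : ℕ} (H : Finset (Finset (Fin n)))
    (h1 : ∀ e ∈ H, e.card = r) (h2 : HasProp r q p Finset.univ H) (h3 : H.card = m) :
    TNum r n q p ≤ m :=
  Nat.sInf_le ⟨H, h1, h2, h3⟩

lemma full_mem {r n q p : ℕ} (hpq : p ≤ q) :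
    (n.choose r) ∈ { m | ∃ H : Finset (Finset (Fin n)),
      (∀ e ∈ H, e.card = r) ∧ HasProp r q p Finset.univ H ∧ H.card = m } := by
  refine ⟨powersetCard r univ, ?_, ?_, ?_⟩
  · intro e he; exact (mem_powersetCard.1 he).2
  · intro Z _ hZ
    obtain ⟨Y, hYZ, hY⟩ := exists_subset_card_eq (show p ≤ Z.card by omega)
    exact ⟨Y, hYZ, hY, fun e _ hc => mem_powersetCard.2 ⟨subset_univ e, hc⟩⟩
  · rw [card_powersetCard, card_univ, Fintype.card_fin]

lemma TNum_le_choose {r n q p : ℕ} (hpq : p ≤ q) : TNum r n q p ≤ n.choose r :=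
  Nat.sInf_le (full_mem hpq)

lemma tDen_le_one {r n q p : ℕ} (hpq : p ≤ q) : tDen r n q p ≤ 1 := by
  have h := TNum_le_choose (r := r) (n := n) hpq
  rcases Nat.eq_zero_or_pos (n.choose r) with h0 | h0
  · simp [tDen, h0, Nat.le_zero.1 (h0 ▸ h)]
  · rw [tDen, div_le_one (by positivity)]
    exact_mod_cast h

lemma tDen_nonneg {r n q p : ℕ} : 0 ≤ tDen r n q p := by
  unfold tDen; positivity

lemma TNum_le_of_subset {r q p n N : ℕ} (X : Finset (Fin N)) (hX : X.card = n)
    (H : Finset (Finset (Fin N))) (hcard : ∀ e ∈ H, e.card = r)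
    (hprop : HasProp r q p X H) :
    TNum r n q p ≤ H.card := by
  have hcardX : Fintype.card X = n := by rw [Fintype.card_coe, hX]
  let ε : Fin n ≃ X := (Fintype.equivFinOfCardEq hcardX).symm
  let g : Fin n ↪ Fin N := ε.toEmbedding.trans (Function.Embedding.subtype _)
  have hgX : ∀ a, g a ∈ X := fun a => (ε a).2
  set H' : Finset (Finset (Fin n)) :=
    (powersetCard r (univ : Finset (Fin n))).filter (fun e => e.map g ∈ H) with hH'
  have hle : H'.card ≤ H.card := by
    apply Finset.card_le_card_of_injOn (fun e => e.map g)
    · intro e he; exact (mem_filter.1 he).2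
    · intro e _ f _ hef; exact Finset.map_injective g hef
  refine le_trans (TNum_le H' ?_ ?_ rfl) hle
  · intro e he
    exact (mem_powersetCard.1 (mem_filter.1 he).1).2
  · intro Z _ hZ
    have hZX : Z.map g ⊆ X := by
      intro x hx
      obtain ⟨a, _, rfl⟩ := Finset.mem_map.1 hx
      exact hgX a
    obtain ⟨Y, hYZ, hYcard, hYcl⟩ := hprop (Z.map g) hZX (by rw [card_map, hZ])
    refine ⟨Z.filter (fun a => g a ∈ Y), filter_subset _ _, ?_, ?_⟩
    · have hmap : (Z.filter (fun a => g a ∈ Y)).map g = Y := by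
        apply Finset.Subset.antisymm
        · intro x hx
          obtain ⟨a, ha, rfl⟩ := Finset.mem_map.1 hx
          exact (mem_filter.1 ha).2
        · intro y hy
          obtain ⟨a, ha, rfl⟩ := Finset.mem_map.1 (hYZ hy)
          exact Finset.mem_map.2 ⟨a, mem_filter.2 ⟨ha, hy⟩, rfl⟩
      rw [← card_map g, hmap, hYcard]
    · intro e hesub hc
      have h1 : e.map g ⊆ Y := by
        intro x hx
        obtain ⟨a, ha, rfl⟩ := Finset.mem_map.1 hx
        exact (mem_filter.1 (hesub ha)).2
      have h2 : e.map g ∈ H := hYcl _ h1 (by rw [card_map, hc])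
      exact mem_filter.2 ⟨mem_powersetCard.2 ⟨subset_univ e, hc⟩, h2⟩

lemma TNum_mono_aux {r q p n : ℕ} (hpq : p ≤ q) :
    (n + 1) * TNum r n q p ≤ (n + 1 - r) * TNum r (n + 1) q p := by
  have hne : { m | ∃ H : Finset (Finset (Fin (n+1))),
      (∀ e ∈ H, e.card = r) ∧ HasProp r q p Finset.univ H ∧ H.card = m }.Nonempty :=
    ⟨_, full_mem hpq⟩
  obtain ⟨H, hHcard, hHprop, hHm⟩ := Nat.sInf_mem hne
  have key : ∀ v : Fin (n + 1), TNum r n q p ≤ (H.filter (fun e => v ∉ e)).card := by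
    intro v
    apply TNum_le_of_subset (univ.erase v)
    · rw [card_erase_of_mem (mem_univ v), card_univ, Fintype.card_fin]; omega
    · intro e he; exact hHcard e (mem_filter.1 he).1
    · intro Z hZsub hZ
      obtain ⟨Y, hYZ, hYcard, hYcl⟩ := hHprop Z (subset_univ Z) hZ
      refine ⟨Y, hYZ, hYcard, fun e hesub hc => ?_⟩
      refine mem_filter.2 ⟨hYcl e hesub hc, fun hv => ?_⟩
      exact (Finset.mem_erase.1 (hZsub (hYZ (hesub hv)))).1 rfl
  have hsum : ∑ v : Fin (n + 1), (H.filter (fun e => v ∉ e)).card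
      = (n + 1 - r) * H.card := by
    have : ∀ v : Fin (n+1), (H.filter (fun e => v ∉ e)).card
        = ∑ e ∈ H, if v ∉ e then 1 else 0 := by
      intro v; rw [Finset.card_filter]
    simp_rw [this]
    rw [Finset.sum_comm]
    rw [Finset.sum_congr rfl (fun e he => ?_), Finset.sum_const, smul_eq_mul, mul_comm]
    have h1 : ∑ v : Fin (n+1), (if v ∉ e then 1 else 0) = eᶜ.card := by
      rw [← Finset.card_filter]
      congr 1
      ext v
      simp
    rw [h1, Finset.card_compl, Fintype.card_fin, hHcard e he]
  calc (n + 1) * TNum r n q p = ∑ _v : Fin (n + 1), TNum r n q p := by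
        rw [Finset.sum_const, card_univ, Fintype.card_fin, smul_eq_mul]
    _ ≤ ∑ v : Fin (n + 1), (H.filter (fun e => v ∉ e)).card := Finset.sum_le_sum fun v _ => key v
    _ = (n + 1 - r) * H.card := hsum
    _ = (n + 1 - r) * TNum r (n + 1) q p := by rw [hHm, TNum]

lemma tDen_mono {r q p n : ℕ} (hpq : p ≤ q) (hrn : r ≤ n) :
    tDen r n q p ≤ tDen r (n + 1) q p := by
  have hnat : TNum r n q p * (n + 1).choose r ≤ TNum r (n + 1) q p * n.choose r := by
    have h1 := TNum_mono_aux (r := r) (n := n) hpq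
    have h2 : n.choose r * (n + 1) = (n + 1).choose r * (n + 1 - r) := Nat.choose_mul_succ_eq n r
    have h3 : (n + 1) * (TNum r n q p * (n + 1).choose r)
        ≤ (n + 1) * (TNum r (n + 1) q p * n.choose r) := by
      calc (n + 1) * (TNum r n q p * (n + 1).choose r)
          = ((n + 1) * TNum r n q p) * (n + 1).choose r := by ring
        _ ≤ ((n + 1 - r) * TNum r (n + 1) q p) * (n + 1).choose r :=
            Nat.mul_le_mul_right _ h1
        _ = TNum r (n + 1) q p * ((n + 1).choose r * (n + 1 - r)) := by ring
        _ = TNum r (n + 1) q p * (n.choose r * (n + 1)) := by rw [← h2]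
        _ = (n + 1) * (TNum r (n + 1) q p * n.choose r) := by ring
    exact Nat.le_of_mul_le_mul_left h3 (Nat.succ_pos n)
  have hc1 : (0 : ℝ) < n.choose r := by exact_mod_cast Nat.choose_pos hrn
  have hc2 : (0 : ℝ) < (n + 1).choose r := by
    exact_mod_cast Nat.choose_pos (le_trans hrn (Nat.le_succ n))
  rw [tDen, tDen, div_le_div_iff₀ hc1 hc2]
  exact_mod_cast hnat

lemma desc_aux (m : ℕ) : ∀ k ≤ m, 2 ^ k * m.descFactorial k ≤ (2 * m).descFactorial k := by
  intro k
  induction k with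
  | zero => intro _; simp
  | succ k ih =>
    intro hk
    have ih' := ih (by omega)
    rw [Nat.descFactorial_succ, Nat.descFactorial_succ]
    calc 2 ^ (k + 1) * ((m - k) * m.descFactorial k)
        = (2 * (m - k)) * (2 ^ k * m.descFactorial k) := by ring
      _ ≤ (2 * m - k) * (2 * m).descFactorial k :=
          Nat.mul_le_mul (by omega) ih'

lemma choose_aux {m r : ℕ} (hrm : r ≤ m) : 2 ^ r * m.choose r ≤ (2 * m).choose r := by
  have h := desc_aux m r hrm
  rw [Nat.descFactorial_eq_factorial_mul_choose, Nat.descFactorial_eq_factorial_mul_choose] at h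
  have : r.factorial * (2 ^ r * m.choose r) ≤ r.factorial * (2 * m).choose r := by
    calc r.factorial * (2 ^ r * m.choose r) = 2 ^ r * (r.factorial * m.choose r) := by ring
      _ ≤ r.factorial * (2 * m).choose r := h
  exact Nat.le_of_mul_le_mul_left this r.factorial_pos

lemma TNum_construction {r p m : ℕ} (hr : 1 ≤ r) :
    TNum r (2 * m) (2 * p + 1) (p + 1) ≤ 2 * m.choose r := by
  have hlt : ∀ x ∈ Finset.range m, x < 2 * m := fun x hx => by
    have := Finset.mem_range.1 hx; omega
  set A : Finset (Fin (2 * m)) := Finset.attachFin (Finset.range m) hlt with hA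
  have hAcard : A.card = m := by rw [hA, Finset.card_attachFin, Finset.card_range]
  have hBcard : Aᶜ.card = m := by
    rw [Finset.card_compl, hAcard, Fintype.card_fin]; omega
  set H : Finset (Finset (Fin (2 * m))) := powersetCard r A ∪ powersetCard r Aᶜ with hH
  have hdisj : Disjoint (powersetCard r A) (powersetCard r Aᶜ) := by
    rw [Finset.disjoint_left]
    intro e h1 h2
    obtain ⟨he1, hc⟩ := mem_powersetCard.1 h1
    obtain ⟨he2, _⟩ := mem_powersetCard.1 h2
    obtain ⟨x, hx⟩ := Finset.card_pos.1 (by omega : 0 < e.card)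
    exact (Finset.mem_compl.1 (he2 hx)) (he1 hx)
  apply TNum_le H
  · intro e he
    rcases Finset.mem_union.1 he with h | h
    · exact (mem_powersetCard.1 h).2
    · exact (mem_powersetCard.1 h).2
  · intro Z _ hZ
    have hsplit : (Z.filter (fun x => x ∈ A)).card + (Z.filter (fun x => x ∉ A)).card
        = 2 * p + 1 := by rw [Finset.card_filter_add_card_filter_not, hZ]
    rcases (by omega : p + 1 ≤ (Z.filter (fun x => x ∈ A)).card
        ∨ p + 1 ≤ (Z.filter (fun x => x ∉ A)).card) with h | h
    · obtain ⟨Y, hYsub, hYcard⟩ := Finset.exists_subset_card_eq h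
      refine ⟨Y, hYsub.trans (filter_subset _ _), hYcard, fun e hesub hc => ?_⟩
      refine Finset.mem_union_left _ (mem_powersetCard.2 ⟨?_, hc⟩)
      intro x hx
      exact (mem_filter.1 (hYsub (hesub hx))).2
    · obtain ⟨Y, hYsub, hYcard⟩ := Finset.exists_subset_card_eq h
      refine ⟨Y, hYsub.trans (filter_subset _ _), hYcard, fun e hesub hc => ?_⟩
      refine Finset.mem_union_right _ (mem_powersetCard.2 ⟨?_, hc⟩)
      intro x hx
      exact Finset.mem_compl.2 (mem_filter.1 (hYsub (hesub hx))).2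
  · rw [hH, Finset.card_union_of_disjoint hdisj, card_powersetCard, card_powersetCard,
      hAcard, hBcard]
    omega

lemma tDen_even_bound {r p m : ℕ} (hr : 1 ≤ r) (hrm : r ≤ m) :
    tDen r (2 * m) (2 * p + 1) (p + 1) ≤ 1 / 2 ^ (r - 1) := by
  have hC : (0 : ℝ) < (2 * m).choose r := by
    exact_mod_cast Nat.choose_pos (by omega : r ≤ 2 * m)
  rw [tDen, div_le_div_iff₀ hC (by positivity)]
  have hnat : TNum r (2 * m) (2 * p + 1) (p + 1) * 2 ^ (r - 1) ≤ (2 * m).choose r := by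
    calc TNum r (2 * m) (2 * p + 1) (p + 1) * 2 ^ (r - 1)
        ≤ (2 * m.choose r) * 2 ^ (r - 1) :=
          Nat.mul_le_mul_right _ (TNum_construction hr)
      _ = 2 ^ r * m.choose r := by
          have h2 : (2 : ℕ) ^ r = 2 ^ (r - 1) * 2 := by
            conv_lhs => rw [show r = r - 1 + 1 by omega]
            rw [pow_succ]
          rw [h2]; ring
      _ ≤ (2 * m).choose r := choose_aux hrm
  calc (TNum r (2 * m) (2 * p + 1) (p + 1) : ℝ) * 2 ^ (r - 1)
      ≤ ((2 * m).choose r : ℝ) := by exact_mod_cast hnat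
    _ = 1 * ((2 * m).choose r : ℝ) := by ring

/-- For all integers `r ≥ 2` and `p ≥ r - 1`, `t_r(2p + 1, p + 1) ≤ 1 / 2 ^ (r - 1)`
(the limit in `n` of `t_r(n, 2p + 1, p + 1)` exists and is at most `1 / 2 ^ (r - 1)`). -/
theorem statement8 (r p : ℕ) (hr : 2 ≤ r) (hp : r - 1 ≤ p) :
    ∃ L : ℝ, Tendsto (fun n => tDen r n (2 * p + 1) (p + 1)) atTop (nhds L) ∧
      L ≤ 1 / 2 ^ (r - 1) := by
  have hpq : p + 1 ≤ 2 * p + 1 := by omega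
  set a : ℕ → ℝ := fun n => tDen r n (2 * p + 1) (p + 1) with ha
  have hmono : Monotone (fun k => a (k + r)) := by
    apply monotone_nat_of_le_succ
    intro k
    have := tDen_mono (n := k + r) hpq (Nat.le_add_left r k)
    simpa [ha, Nat.add_right_comm k 1 r] using this
  have hbdd : BddAbove (Set.range (fun k => a (k + r))) := by
    refine ⟨1, ?_⟩
    rintro x ⟨k, rfl⟩
    exact tDen_le_one hpq
  have hconv : Tendsto (fun k => a (k + r)) atTop (nhds (⨆ k, a (k + r))) :=
    tendsto_atTop_ciSup hmono hbdd
  refine ⟨⨆ k, a (k + r), (tendsto_add_atTop_iff_nat r).1 hconv, ?_⟩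
  have hfull : Tendsto a atTop (nhds (⨆ k, a (k + r))) :=
    (tendsto_add_atTop_iff_nat r).1 hconv
  have h2m : Tendsto (fun m => a (2 * m)) atTop (nhds (⨆ k, a (k + r))) := by
    apply hfull.comp
    apply tendsto_atTop_atTop.2
    intro b
    exact ⟨b, fun c hc => by omega⟩
  apply le_of_tendsto h2m
  filter_upwards [eventually_ge_atTop r] with m hm
  exact tDen_even_bound (by omega) hm
end

section
/- If H is a 3-uniform hypergraph on n ≥ 4 vertices with more than (3/4)·C(n,3) edges, then H contains four vertices all four of whose triples are edges of H (i.e., H contains a clique K_4^3 on 4 vertices). -/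
open Finset

lemma super_count (n : ℕ) (e : Finset (Fin n)) (he : e.card = 3) :
    ((powersetCard 4 (univ : Finset (Fin n))).filter (e ⊆ ·)).card = n - 3 := by
  have : ((powersetCard 4 (univ : Finset (Fin n))).filter (e ⊆ ·)).card
      = (powersetCard 1 ((univ : Finset (Fin n)) \ e)).card := by
    apply Finset.card_bij (fun Y _ => Y \ e)
    · intro Y hY
      simp only [mem_filter, mem_powersetCard] at hY
      rw [mem_powersetCard]
      refine ⟨fun x hx => ?_, ?_⟩
      · rw [mem_sdiff] at hx ⊢; exact ⟨mem_univ _, hx.2⟩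
      · rw [card_sdiff_of_subset hY.2, hY.1.2, he]
    · intro Y hY Z hZ h
      simp only [mem_filter] at hY hZ
      have : Y \ e ∪ e = Z \ e ∪ e := by rw [h]
      rwa [sdiff_union_of_subset hY.2, sdiff_union_of_subset hZ.2] at this
    · intro A hA
      rw [mem_powersetCard] at hA
      refine ⟨A ∪ e, ?_, ?_⟩
      · simp only [mem_filter, mem_powersetCard]
        have hd : Disjoint A e := by
          rw [disjoint_right]
          intro x hx hxA
          exact (mem_sdiff.1 (hA.1 hxA)).2 hx
        refine ⟨⟨subset_univ _, ?_⟩, subset_union_right⟩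
        rw [card_union_of_disjoint hd, hA.2, he]
      · rw [union_sdiff_right, sdiff_eq_self_of_disjoint]
        rw [disjoint_right]
        intro x hx hxA
        exact (mem_sdiff.1 (hA.1 hxA)).2 hx
  rw [this, card_powersetCard, card_sdiff_of_subset (subset_univ e), card_univ, Fintype.card_fin, he,
    Nat.choose_one_right]

/-- If a 3-uniform hypergraph on `n ≥ 4` vertices has more than `(3/4)·C(n, 3)` edges,
then it contains a clique on `4` vertices (a copy of `K₄³`). -/
theorem statement19 (n : ℕ) (hn : 4 ≤ n) (H : Finset (Finset (Fin n)))
    (hH : ∀ e ∈ H, e.card = 3)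
    (hcard : (3 / 4 : ℝ) * (n.choose 3) < H.card) :
    ∃ Y : Finset (Fin n), Y.card = 4 ∧ ∀ e ⊆ Y, e.card = 3 → e ∈ H := by
  by_contra hcon
  push_neg at hcon
  set T := powersetCard 3 (univ : Finset (Fin n)) with hT
  set F := powersetCard 4 (univ : Finset (Fin n)) with hF
  set M := T \ H with hM
  have hHT : H ⊆ T := fun e heH => by
    rw [mem_powersetCard]; exact ⟨subset_univ _, hH e heH⟩
  have hMcard : M.card = n.choose 3 - H.card := by
    rw [hM, card_sdiff_of_subset hHT, card_powersetCard, card_univ, Fintype.card_fin]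
  -- each Y in F contains an element of M
  have hcover : ∀ Y ∈ F, ∃ e ∈ M, e ⊆ Y := by
    intro Y hY
    rw [hF, mem_powersetCard] at hY
    obtain ⟨e, he1, he2, he3⟩ := hcon Y hY.2
    refine ⟨e, ?_, he1⟩
    rw [hM, mem_sdiff, hT, mem_powersetCard]
    exact ⟨⟨subset_univ _, he2⟩, he3⟩
  -- double counting
  have key : F.card ≤ M.card * (n - 3) := by
    calc F.card = ∑ Y ∈ F, 1 := by simp
      _ ≤ ∑ Y ∈ F, (M.filter (· ⊆ Y)).card := by
          apply Finset.sum_le_sum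
          intro Y hY
          obtain ⟨e, heM, heY⟩ := hcover Y hY
          exact Finset.card_pos.2 ⟨e, mem_filter.2 ⟨heM, heY⟩⟩
      _ = ∑ e ∈ M, (F.filter (e ⊆ ·)).card := by
          simp only [card_filter]
          rw [Finset.sum_comm']
          simp
      _ = ∑ e ∈ M, (n - 3) := by
          apply Finset.sum_congr rfl
          intro e heM
          have : e.card = 3 := by
            rw [hM, mem_sdiff, hT, mem_powersetCard] at heM
            exact heM.1.2
          exact super_count n e this
      _ = M.card * (n - 3) := by rw [Finset.sum_const, smul_eq_mul]
  have hFcard : F.card = n.choose 4 := by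
    rw [hF, card_powersetCard, card_univ, Fintype.card_fin]
  -- 4 * choose n 4 = (n-3) * choose n 3
  have hchoose : 4 * n.choose 4 = (n - 3) * n.choose 3 := by
    have h2 : n.choose 4 * 4 = n.choose 3 * (n - 3) := by
      simpa using Nat.choose_succ_right_eq n 3
    linarith
  -- So 4 * M.card * (n-3) ≥ 4 * F.card = (n-3) * choose n 3, hence 4 * M.card ≥ choose n 3
  have hn3 : 0 < n - 3 := by omega
  have key2 : n.choose 3 ≤ 4 * M.card := by
    have h1 : (n - 3) * n.choose 3 ≤ 4 * (M.card * (n - 3)) := by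
      rw [← hchoose]
      exact Nat.mul_le_mul_left 4 (hFcard ▸ key)
    nlinarith [hn3]
  -- contradiction with hcard
  have hHle : H.card ≤ n.choose 3 := by
    calc H.card ≤ T.card := card_le_card hHT
      _ = n.choose 3 := by rw [hT, card_powersetCard, card_univ, Fintype.card_fin]
  have : (4 : ℕ) * H.card ≤ 3 * n.choose 3 := by omega
  have hR : (4 : ℝ) * H.card ≤ 3 * n.choose 3 := by exact_mod_cast this
  nlinarith [hcard]
end
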